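/- arXiv:2305.00178 — 5 statements merged into one kernel-verified Lean document; each statement's English description precedes it below -/
import Mathlib

section
/- Let G be a (linearly) ordered abelian group, β₁, …, β_m ∈ G, λ a limit ordinal, and (γ_s)_{s<λ} a well-ordered, monotone increasing family of elements of G without a last element. Let t₁, …, t_m be distinct integers. Then there exist an ordinal ν < λ and an index r with 1 ≤ r ≤ m such that β_i + t_iγ_s > β_r + t_rγ_s for all i ≠ r and all s with ν < s < λ. -/
/-- Helper: for a pair with `t i < t j`, the comparison eventually stabilizes. -/
theorem ostrowski_pair {G : Type*} [AddCommGroup G] [LinearOrder G] [IsOrderedAddMonoid G]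
    (m : ℕ) (β : Fin m → G)
    (lam : Ordinal.{0})
    (γ : Ordinal.{0} → G)
    (hmono : ∀ s s' : Ordinal, s < s' → s' < lam → γ s < γ s')
    (hl : 0 < lam)
    (t : Fin m → ℤ) (i j : Fin m) (hij : t i < t j) :
    ∃ ν, ν < lam ∧ ((∀ s : Ordinal, ν < s → s < lam → β i + t i • γ s < β j + t j • γ s) ∨
      (∀ s : Ordinal, ν < s → s < lam → β j + t j • γ s < β i + t i • γ s)) := by
  by_cases h : ∃ s₀, s₀ < lam ∧ β i + t i • γ s₀ ≤ β j + t j • γ s₀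
  · obtain ⟨s₀, hs₀, hle⟩ := h
    refine ⟨s₀, hs₀, Or.inl ?_⟩
    intro s hs hslam
    have hγ : γ s₀ < γ s := hmono _ _ hs hslam
    have h2 : (t j - t i) • γ s₀ < (t j - t i) • γ s :=
      zsmul_lt_zsmul_right (by omega) hγ
    rw [sub_zsmul, sub_zsmul] at h2
    simp only [← sub_eq_add_neg] at h2
    rw [← sub_neg]
    have heq : (β i + t i • γ s) - (β j + t j • γ s) =
        ((β i + t i • γ s₀) - (β j + t j • γ s₀)) -
        ((t j • γ s - t i • γ s) - (t j • γ s₀ - t i • γ s₀)) := by abel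
    rw [heq]
    exact sub_neg.mpr (lt_of_le_of_lt (sub_nonpos.mpr hle) (sub_pos.mpr h2))
  · push_neg at h
    exact ⟨0, hl, Or.inr fun s _ hslam => h s hslam⟩

/-- **Ostrowski's lemma, second part.** Let `G` be a linearly ordered abelian group,
`β 0, …, β (m-1) ∈ G` (with `m ≥ 1`), `lam` a limit ordinal, and `(γ s)_{s < lam}` a
well-ordered, monotone increasing family of elements of `G` without a last element. Let
`t 0, …, t (m-1)` be distinct integers. Then there exist an ordinal `ν < lam` and an index `r`
such that `β i + t i • γ s > β r + t r • γ s` for all `i ≠ r` and all `s` with `ν < s < lam`. -/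
theorem ostrowski_minimal_index {G : Type*} [AddCommGroup G] [LinearOrder G] [IsOrderedAddMonoid G]
    (m : ℕ) (hm : 0 < m) (β : Fin m → G)
    (lam : Ordinal.{0}) (hlam : Order.IsSuccLimit lam)
    (γ : Ordinal.{0} → G)
    (hmono : ∀ s s' : Ordinal, s < s' → s' < lam → γ s < γ s')
    (hnolast : ∀ s : Ordinal, s < lam → ∃ s' : Ordinal, s' < lam ∧ s < s')
    (t : Fin m → ℤ) (ht : Function.Injective t) :
    ∃ ν < lam, ∃ r : Fin m, ∀ i : Fin m, i ≠ r → ∀ s : Ordinal, ν < s → s < lam →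
      β r + t r • γ s < β i + t i • γ s := by
  have hl : 0 < lam := hlam.pos
  -- stabilization for every pair of distinct indices
  have pairlem : ∀ i j : Fin m, i ≠ j →
      ∃ ν, ν < lam ∧ ((∀ s : Ordinal, ν < s → s < lam → β i + t i • γ s < β j + t j • γ s) ∨
        (∀ s : Ordinal, ν < s → s < lam → β j + t j • γ s < β i + t i • γ s)) := by
    intro i j hij
    rcases lt_trichotomy (t i) (t j) with h | h | h
    · obtain ⟨ν, hν, hres⟩ := ostrowski_pair m β lam γ hmono hl t i j h
      exact ⟨ν, hν, hres⟩
    · exact absurd (ht h) hij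
    · obtain ⟨ν, hν, hres⟩ := ostrowski_pair m β lam γ hmono hl t j i h
      exact ⟨ν, hν, hres.symm⟩
  choose N hNlt hN using pairlem
  set F : Fin m × Fin m → Ordinal := fun p =>
    if h : p.1 = p.2 then 0 else N p.1 p.2 h with hF
  set ν : Ordinal := Finset.univ.sup F with hνdef
  have hν : ν < lam := by
    rw [hνdef]
    rw [Finset.sup_lt_iff (by simpa using hl)]
    intro p _
    rw [hF]
    dsimp only
    split
    · exact hl
    · exact hNlt _ _ _
  -- pick s₀ with ν < s₀ < lam
  have hs₀lam : ν + 1 < lam := by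
    rw [Ordinal.add_one_eq_succ]
    exact hlam.succ_lt hν
  have hνs₀ : ν < ν + 1 := by
    rw [Ordinal.add_one_eq_succ]
    exact Order.lt_succ ν
  set s₀ : Ordinal := ν + 1 with hs₀def
  -- pick r minimizing the value at s₀
  obtain ⟨r, -, hr⟩ := Finset.exists_min_image Finset.univ
    (fun i => β i + t i • γ s₀) ⟨⟨0, hm⟩, Finset.mem_univ _⟩
  refine ⟨ν, hν, r, ?_⟩
  intro i hir s hs hslam
  have hFle : F (i, r) ≤ ν := Finset.le_sup (Finset.mem_univ _)
  have hFeq : F (i, r) = N i r hir := by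
    rw [hF]; exact dif_neg hir
  have hNν : N i r hir ≤ ν := hFeq ▸ hFle
  rcases hN i r hir with hcase | hcase
  · exfalso
    have := hcase s₀ (lt_of_le_of_lt hNν hνs₀) hs₀lam
    exact absurd (hr i (Finset.mem_univ _)) (not_le.mpr this)
  · exact hcase s (lt_of_le_of_lt hNν hs) hslam
end

section
/- Let V ⊆ V' be an immediate extension of valuation rings with fraction field extension K ⊆ K', and let (v_i)_{i<λ} be an algebraic pseudo convergent sequence in K which has a pseudo limit x in V', algebraic over V, but no pseudo limit in K. If the minimal polynomial h = Irr(x, K) of x over K has coefficients in V, then val(h(v_i)) < val(h(v_j)) for all large enough i < j < λ. -/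
universe u

open Polynomial

/-- `ValLT V' a b` encodes "`val a < val b`" in the additive convention of valuation theory;
in Mathlib's multiplicative convention for `ValuationSubring.valuation` this is
`V'.valuation b < V'.valuation a`. -/
def ValuationSubring.ValLT {K' : Type u} [Field K'] (V' : ValuationSubring K') (a b : K') : Prop :=
  V'.valuation b < V'.valuation a

/-- `(v i)_{i < lam}` is a pseudo convergent sequence:
`val (v i - v i'') < val (v i' - v i'')` for all `i < i' < i'' < lam`. -/
def IsPseudoConvergent {K' : Type u} [Field K'] (V' : ValuationSubring K') (lam : Ordinal.{0})
    (v : Ordinal.{0} → K') : Prop :=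
  ∀ i i' i'' : Ordinal, i < i' → i' < i'' → i'' < lam →
    V'.ValLT (v i - v i'') (v i' - v i'')

/-- `w` is a pseudo limit of `(v i)_{i < lam}`:
`val (w - v i) < val (w - v i')` for all `i < i' < lam`. -/
def IsPseudoLimit {K' : Type u} [Field K'] (V' : ValuationSubring K') (lam : Ordinal.{0})
    (v : Ordinal.{0} → K') (w : K') : Prop :=
  ∀ i i' : Ordinal, i < i' → i' < lam → V'.ValLT (w - v i) (w - v i')

/-- All coefficients of the polynomial `f` lie in the subset `R` of `K'`. -/
def CoeffsIn {K' : Type u} [Field K'] (R : Set K') (f : Polynomial K') : Prop :=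
  ∀ n : ℕ, f.coeff n ∈ R

/-- `val (f (v i)) < val (f (v j))` for all large enough `i < j < lam`. -/
def EvalValStrictMono {K' : Type u} [Field K'] (V' : ValuationSubring K') (lam : Ordinal.{0})
    (v : Ordinal.{0} → K') (f : Polynomial K') : Prop :=
  ∃ i₀ < lam, ∀ i j : Ordinal, i₀ ≤ i → i < j → j < lam →
    V'.ValLT (f.eval (v i)) (f.eval (v j))

/-- The pseudo convergent sequence `(v i)_{i<lam}` is algebraic (w.r.t. polynomials with
coefficients in the subset `R`). -/
def IsAlgebraicSeq {K' : Type u} [Field K'] (V' : ValuationSubring K') (R : Set K')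
    (lam : Ordinal.{0}) (v : Ordinal.{0} → K') : Prop :=
  ∃ f : Polynomial K', CoeffsIn R f ∧ EvalValStrictMono V' lam v f

/-- `V ⊆ V'` (with `V = V' ∩ K`) is an immediate extension: the inclusion induces isomorphisms
of value groups and residue fields, i.e. values and residues of elements of `V'` are already
realized by elements of `K` (injectivity being automatic). -/
structure IsImmediateExtension {K' : Type u} [Field K'] (V' : ValuationSubring K')
    (K : Subfield K') : Prop where
  val_surj : ∀ x : K', x ≠ 0 → ∃ y ∈ K, V'.valuation x = V'.valuation y
  residue_surj : ∀ x ∈ V', ∃ y ∈ K, y ∈ V' ∧ V'.valuation (x - y) < 1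

/-- The valuation ring `V = V' ∩ K` of the subfield `K`. -/
def valRing {K' : Type u} [Field K'] (V' : ValuationSubring K') (K : Subfield K') : Subring K' :=
  V'.toSubring ⊓ K.toSubring

/-- `R[x]`, the subring generated by the subring `R` and the element `x`. -/
def Subring.adjoinElt {K' : Type u} [Field K'] (R : Subring K') (x : K') : Subring K' :=
  Subring.closure (↑R ∪ {x})


section Aux

variable {G : Type*} [LinearOrderedCommGroupWithZero G]

private lemma aux_pow_lt_pow {A B : G} (hAB : A < B) : ∀ m : ℕ, m ≠ 0 → A ^ m < B ^ m := by
  intro m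
  induction m with
  | zero => intro hm; exact absurd rfl hm
  | succ n ih =>
    intro _
    rcases Nat.eq_zero_or_pos n with h0 | hpos
    · simpa [h0] using hAB
    · rw [pow_succ, pow_succ]
      exact mul_lt_mul'' (ih hpos.ne') hAB zero_le' zero_le'

end Aux

/-- **Lemma 3(1) of the paper.** Let `V ⊆ V'` be an immediate extension of valuation rings
(`V = V' ∩ K`) and `(v i)_{i<lam}` an algebraic pseudo convergent sequence in `K` which has a
pseudo limit `x` in `V'`, algebraic over `V`, but no pseudo limit in `K`. If the monic minimal
polynomial `h = Irr(x, K)` of `x` over `K` has all its coefficients in `V`, then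
`val (h (v i)) < val (h (v j))` for all large enough `i < j < lam`. -/
theorem minpoly_eval_val_strictMono
    {K' : Type u} [Field K'] (V' : ValuationSubring K') (K : Subfield K')
    (himm : IsImmediateExtension V' K)
    (lam : Ordinal.{0}) (hlam : Order.IsSuccLimit lam) (v : Ordinal.{0} → K')
    (hvK : ∀ i < lam, v i ∈ K)
    (hpc : IsPseudoConvergent V' lam v)
    (halgseq : IsAlgebraicSeq V' (↑K) lam v)
    (x : K') (hxV' : x ∈ V') (hxlim : IsPseudoLimit V' lam v x)
    (hxalg : ∃ f : Polynomial K', f ≠ 0 ∧ CoeffsIn (↑(valRing V' K)) f ∧ f.eval x = 0)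
    (hnoK : ∀ w ∈ K, ¬ IsPseudoLimit V' lam v w)
    (h : Polynomial K') (hmonic : h.Monic) (hhK : CoeffsIn (↑K) h) (hhx : h.eval x = 0)
    (hminpoly : ∀ f : Polynomial K', f ≠ 0 → CoeffsIn (↑K) f → f.eval x = 0 →
      h.degree ≤ f.degree)
    (hhV : CoeffsIn (↑(valRing V' K)) h) :
    EvalValStrictMono V' lam v h := by
    classical
  -- Notation
  set val := V'.valuation with hvaldef
  have hlam0 : (0 : Ordinal) < lam := hlam.pos
  have hsucc : ∀ i : Ordinal, i < lam → i + 1 < lam := by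
    intro i hi
    rw [Ordinal.add_one_eq_succ]
    exact hlam.succ_lt hi
  -- the values γ i = val (v i - x) are strictly decreasing (multiplicative convention)
  set γ : Ordinal → _ := fun i => val (v i - x) with hγdef
  have hγanti : ∀ i j : Ordinal, i < j → j < lam → γ j < γ i := by
    intro i j hij hj
    have h1 : val (x - v j) < val (x - v i) := hxlim i j hij hj
    simpa only [hγdef, Valuation.map_sub_swap] using h1
  have hγne : ∀ i : Ordinal, i < lam → γ i ≠ 0 := by
    intro i hi h0
    have h1 := hγanti i (i + 1) (by
      rw [Ordinal.add_one_eq_succ]; exact Order.lt_succ i) (hsucc i hi)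
    rw [h0] at h1
    exact not_lt_zero' h1
  -- Taylor expansion of h at x
  set d := h.natDegree with hddef
  have hd1 : 1 ≤ d := by
    by_contra hdc
    have hd0 : d = 0 := by omega
    have : h = 1 := hmonic.natDegree_eq_zero.mp hd0
    rw [this] at hhx
    simp at hhx
  set a : ℕ → K' := fun k => (Polynomial.taylor x h).coeff k with hadef
  have ha0 : a 0 = 0 := by
    simp only [hadef, Polynomial.taylor_coeff_zero, hhx]
  have had : a d ≠ 0 := by
    have hne : Polynomial.taylor x h ≠ 0 := by
      intro h0
      exact hmonic.ne_zero (Polynomial.taylor_injective x (by simpa using h0))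
    have : (Polynomial.taylor x h).natDegree = d := Polynomial.natDegree_taylor h x
    simpa only [hadef, ← this, Polynomial.leadingCoeff] using Polynomial.leadingCoeff_ne_zero.mpr hne
  have heval : ∀ y : K',
      h.eval y = ∑ k ∈ Finset.range (d + 1), a k * (y - x) ^ k := by
    intro y
    conv_lhs => rw [← Polynomial.taylor_eval_sub x h y]
    rw [Polynomial.eval_eq_sum_range, Polynomial.natDegree_taylor]
  -- the support of the expansion
  set T : Finset ℕ := (Finset.range (d + 1)).filter (fun k => a k ≠ 0) with hTdef
  have hdT : d ∈ T := by
    simp only [hTdef, Finset.mem_filter, Finset.mem_range]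
    exact ⟨Nat.lt_succ_self d, had⟩
  have hT1 : ∀ k ∈ T, k ≠ 0 := by
    intro k hk h0
    rw [hTdef, Finset.mem_filter] at hk
    exact hk.2 (h0 ▸ ha0)
  have hsumT : ∀ y : K', h.eval y = ∑ k ∈ T, a k * (y - x) ^ k := by
    intro y
    rw [heval y, hTdef]
    exact (Finset.sum_filter_of_ne (fun k _ hne => by
      intro h0
      apply hne
      rw [h0, zero_mul])).symm
  -- the value of the k-th term
  set f : Ordinal → ℕ → _ := fun i k => val (a k) * γ i ^ k with hfdef
  have hfval : ∀ i : Ordinal, ∀ k : ℕ, val (a k * (v i - x) ^ k) = f i k := by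
    intro i k
    simp only [hfdef, map_mul, map_pow, hγdef]
  have hfne : ∀ i : Ordinal, i < lam → ∀ k ∈ T, f i k ≠ 0 := by
    intro i hi k hk
    rw [hTdef, Finset.mem_filter] at hk
    exact mul_ne_zero ((Valuation.ne_zero_iff val).mpr hk.2) (pow_ne_zero k (hγne i hi))
  -- key monotonicity: once a lower-index term catches up, it dominates strictly forever
  have key : ∀ k k' : ℕ, k < k' → a k ≠ 0 → a k' ≠ 0 →
      ∀ i j : Ordinal, i < j → j < lam → f i k' ≤ f i k → f j k' < f j k := by
    intro k k' hkk' hak hak' i j hij hjlam hle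
    have hilam : i < lam := lt_trans hij hjlam
    obtain ⟨m, rfl⟩ : ∃ m, k' = k + m := ⟨k' - k, by omega⟩
    have hm : m ≠ 0 := by omega
    have hγi := hγne i hilam
    have hγj := hγne j hjlam
    have hca' : val (a (k + m)) ≠ 0 := (Valuation.ne_zero_iff val).mpr hak'
    -- cancel γ i ^ k from the hypothesis
    have h1 : val (a (k + m)) * γ i ^ m ≤ val (a k) := by
      have h2 : (val (a (k + m)) * γ i ^ m) * γ i ^ k ≤ val (a k) * γ i ^ k := by
        calc (val (a (k + m)) * γ i ^ m) * γ i ^ k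
            = val (a (k + m)) * γ i ^ (k + m) := by
              rw [mul_assoc, ← pow_add, add_comm m k]
          _ ≤ val (a k) * γ i ^ k := hle
      exact le_of_mul_le_mul_right h2 (zero_lt_iff.mpr (pow_ne_zero k hγi))
    have h3 : val (a (k + m)) * γ j ^ m < val (a k) :=
      lt_of_lt_of_le
        (mul_lt_mul_of_pos_left (aux_pow_lt_pow (hγanti i j hij hjlam) m hm)
          (zero_lt_iff.mpr hca')) h1
    calc f j (k + m) = (val (a (k + m)) * γ j ^ m) * γ j ^ k := by
          show val (a (k + m)) * γ j ^ (k + m) = _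
          rw [mul_assoc, ← pow_add, add_comm m k]
      _ < val (a k) * γ j ^ k :=
          mul_lt_mul_of_pos_right h3 (zero_lt_iff.mpr (pow_ne_zero k hγj))
      _ = f j k := rfl
  -- for each pair, there is a threshold beyond which the comparison is strict and constant
  have pairstep : ∀ k ∈ T, ∀ k' ∈ T, k < k' →
      ∃ t, t < lam ∧ ((∀ i, t ≤ i → i < lam → f i k' < f i k) ∨
        (∀ i, t ≤ i → i < lam → f i k < f i k')) := by
    intro k hk k' hk' hkk'
    have hak : a k ≠ 0 := by rw [hTdef, Finset.mem_filter] at hk; exact hk.2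
    have hak' : a k' ≠ 0 := by rw [hTdef, Finset.mem_filter] at hk'; exact hk'.2
    by_cases hex : ∃ t, t < lam ∧ f t k' ≤ f t k
    · obtain ⟨t, ht, hle⟩ := hex
      refine ⟨t + 1, hsucc t ht, Or.inl ?_⟩
      intro i hi hilam
      have hti : t < i := lt_of_lt_of_le (by
        rw [Ordinal.add_one_eq_succ]; exact Order.lt_succ t) hi
      exact key k k' hkk' hak hak' t i hti hilam hle
    · push_neg at hex
      exact ⟨0, hlam0, Or.inr (fun i _ hilam => hex i hilam)⟩
  -- combine thresholds over all pairs
  have combine : ∀ P : Finset (ℕ × ℕ), (∀ p ∈ P, p.1 ∈ T ∧ p.2 ∈ T ∧ p.1 < p.2) →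
      ∃ t, t < lam ∧ ∀ p ∈ P, ((∀ i, t ≤ i → i < lam → f i p.2 < f i p.1) ∨
        (∀ i, t ≤ i → i < lam → f i p.1 < f i p.2)) := by
    intro P
    induction P using Finset.induction_on with
    | empty => exact fun _ => ⟨0, hlam0, by simp⟩
    | @insert q Q hq ih =>
      intro hP
      obtain ⟨t₁, ht₁, hrec⟩ := ih (fun p hp => hP p (Finset.mem_insert_of_mem hp))
      obtain ⟨hq1, hq2, hq3⟩ := hP q (Finset.mem_insert_self q Q)
      obtain ⟨t₂, ht₂, hdir⟩ := pairstep q.1 hq1 q.2 hq2 hq3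
      refine ⟨max t₁ t₂, max_lt ht₁ ht₂, ?_⟩
      intro p hp
      rcases Finset.mem_insert.mp hp with rfl | hp
      · rcases hdir with hL | hR
        · exact Or.inl fun i hi hil => hL i (le_trans (le_max_right _ _) hi) hil
        · exact Or.inr fun i hi hil => hR i (le_trans (le_max_right _ _) hi) hil
      · rcases hrec p hp with hL | hR
        · exact Or.inl fun i hi hil => hL i (le_trans (le_max_left _ _) hi) hil
        · exact Or.inr fun i hi hil => hR i (le_trans (le_max_left _ _) hi) hil
  set pairs : Finset (ℕ × ℕ) := (T ×ˢ T).filter (fun p => p.1 < p.2) with hpairsdef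
  obtain ⟨i₀, hi₀lam, hall⟩ := combine pairs (by
    intro p hp
    rw [hpairsdef, Finset.mem_filter, Finset.mem_product] at hp
    exact ⟨hp.1.1, hp.1.2, hp.2⟩)
  -- the dominating index
  obtain ⟨k₀, hk₀T, hk₀max⟩ := Finset.exists_max_image T (f i₀) ⟨d, hdT⟩
  have hmempairs : ∀ k k' : ℕ, k ∈ T → k' ∈ T → k < k' → (k, k') ∈ pairs := by
    intro k k' hk hk' hlt
    rw [hpairsdef, Finset.mem_filter, Finset.mem_product]
    exact ⟨⟨hk, hk'⟩, hlt⟩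
  have hdom : ∀ i, i₀ ≤ i → i < lam → ∀ k ∈ T, k ≠ k₀ → f i k < f i k₀ := by
    intro i hi hil k hk hne
    rcases lt_or_gt_of_ne hne with hlt | hgt
    · rcases hall (k, k₀) (hmempairs k k₀ hk hk₀T hlt) with hL | hR
      · exact absurd (hL i₀ le_rfl hi₀lam) (not_lt_of_ge (hk₀max k hk))
      · exact hR i hi hil
    · rcases hall (k₀, k) (hmempairs k₀ k hk₀T hk hgt) with hL | hR
      · exact hL i hi hil
      · exact absurd (hR i₀ le_rfl hi₀lam) (not_lt_of_ge (hk₀max k hk))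
  -- value of h at v i for i ≥ i₀
  have hv : ∀ i, i₀ ≤ i → i < lam → val (h.eval (v i)) = f i k₀ := by
    intro i hi hil
    have hrest : val (∑ k ∈ T.erase k₀, a k * (v i - x) ^ k)
        < val (a k₀ * (v i - x) ^ k₀) := by
      rw [hfval]
      refine Valuation.map_sum_lt val (hfne i hil k₀ hk₀T) ?_
      intro k hk
      rw [Finset.mem_erase] at hk
      rw [hfval]
      exact hdom i hi hil k hk.2 hk.1
    rw [hsumT (v i), ← Finset.add_sum_erase T _ hk₀T,
      Valuation.map_add_eq_of_lt_left val hrest, hfval]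
  -- conclusion
  refine ⟨i₀, hi₀lam, ?_⟩
  intro i j hi hij hjlam
  have hilam : i < lam := lt_trans hij hjlam
  show val (h.eval (v j)) < val (h.eval (v i))
  rw [hv i hi hilam, hv j (le_trans hi (le_of_lt hij)) hjlam]
  have hca : val (a k₀) ≠ 0 := by
    rw [hTdef, Finset.mem_filter] at hk₀T
    exact (Valuation.ne_zero_iff val).mpr hk₀T.2
  exact mul_lt_mul_of_pos_left
    (aux_pow_lt_pow (hγanti i j hij hjlam) k₀ (hT1 k₀ hk₀T))
    (zero_lt_iff.mpr hca)
end

section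
/- Let V ⊆ V' be an immediate extension of valuation rings with fraction field extension K ⊆ K', and let (v_i)_{i<λ} be an algebraic pseudo convergent sequence in K which has a pseudo limit x in V', algebraic over V, but no pseudo limit in K. Suppose h = Irr(x, K) lies in V[X] and has minimal degree among the polynomials f ∈ V[X] such that val(f(v_i)) < val(f(v_j)) for all large i < j < λ. For i < λ set x_i = (x − v_i)/(v_{i+1} − v_i) ∈ V', and let m' be the maximal ideal of V'. Then V'' = V' ∩ K(x) equals the union over i < λ of the localizations V[x_i]_{m' ∩ V[x_i]}, and this family of subrings is filtered increasing. -/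
universe u

open Polynomial

/-- `K(x)`, the subfield generated by the subfield `K` and the element `x`. -/
def Subfield.adjoinElt {K' : Type u} [Field K'] (K : Subfield K') (x : K') : Subfield K' :=
  Subfield.closure (↑K ∪ {x})

/-- The localization `R_{m' ∩ R}` of the subring `R ⊆ V'` at the prime ideal `m' ∩ R`, where
`m'` is the maximal ideal of the valuation subring `V'` (the elements of multiplicative
valuation `< 1`), regarded as a subset of the ambient field: the fractions `a / b` with
`a, b ∈ R` and `b ∉ m'`. -/
def locSet {K' : Type u} [Field K'] (V' : ValuationSubring K') (R : Subring K') : Set K' :=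
  {z : K' | ∃ a ∈ R, ∃ b ∈ R, ¬ V'.valuation b < 1 ∧ z = a / b}


set_option linter.unusedSectionVars false
set_option maxHeartbeats 1000000
set_option synthInstance.maxHeartbeats 400000

namespace Lem32

variable {K' : Type u} [Field K'] {V' : ValuationSubring K'} {K : Subfield K'}
variable {lam : Ordinal.{0}} {v : Ordinal.{0} → K'} {x : K'}

theorem succ_lt (hlam : Order.IsSuccLimit lam) {i : Ordinal} (hi : i < lam) : i + 1 < lam := by
  rw [Ordinal.add_one_eq_succ]
  exact hlam.succ_lt hi

theorem lt_succ_self (i : Ordinal) : i < i + 1 := by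
  rw [Ordinal.add_one_eq_succ]; exact Order.lt_succ i

section basicval
variable (hlam : Order.IsSuccLimit lam) (hxlim : IsPseudoLimit V' lam v x)
include hlam hxlim

theorem mu_lt {i j : Ordinal} (hij : i < j) (hj : j < lam) :
    V'.valuation (x - v j) < V'.valuation (x - v i) :=
  hxlim i j hij hj

theorem mu_ne {i : Ordinal} (hi : i < lam) : V'.valuation (x - v i) ≠ 0 := by
  have := mu_lt hlam hxlim (lt_succ_self i) (succ_lt hlam hi)
  exact fun h => by simp [h] at this

theorem sub_x_ne {i : Ordinal} (hi : i < lam) : x - v i ≠ 0 :=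
  (Valuation.ne_zero_iff _).1 (mu_ne hlam hxlim hi)

theorem val_delta {i : Ordinal} (hi : i < lam) :
    V'.valuation (v (i + 1) - v i) = V'.valuation (x - v i) := by
  have h1 : V'.valuation (x - v (i + 1)) < V'.valuation (x - v i) :=
    mu_lt hlam hxlim (lt_succ_self i) (succ_lt hlam hi)
  have : v (i + 1) - v i = (x - v i) - (x - v (i + 1)) := by ring
  rw [this, Valuation.map_sub_eq_of_lt_left _ h1]

theorem delta_ne {i : Ordinal} (hi : i < lam) : v (i + 1) - v i ≠ 0 := by
  have := val_delta hlam hxlim hi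
  intro h
  exact mu_ne hlam hxlim hi (by rw [← this, h, map_zero])

theorem val_v_sub_v {i j : Ordinal} (hij : i < j) (hj : j < lam) :
    V'.valuation (v j - v i) = V'.valuation (x - v i) := by
  have h1 : V'.valuation (x - v j) < V'.valuation (x - v i) := mu_lt hlam hxlim hij hj
  have : v j - v i = (x - v i) - (x - v j) := by ring
  rw [this, Valuation.map_sub_eq_of_lt_left _ h1]

theorem val_xi {i : Ordinal} (hi : i < lam) :
    V'.valuation ((x - v i) / (v (i + 1) - v i)) = 1 := by
  rw [Valuation.map_div, val_delta hlam hxlim hi, div_self (mu_ne hlam hxlim hi)]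

theorem xi_mem_V' {i : Ordinal} (hi : i < lam) : (x - v i) / (v (i + 1) - v i) ∈ V' :=
  V'.mem_of_valuation_le_one _ (le_of_eq (val_xi hlam hxlim hi))

end basicval

theorem mem_valRing_iff {y : K'} : y ∈ valRing V' K ↔ y ∈ V' ∧ y ∈ K := by
  rfl

theorem mem_adjoinElt_of_mem {R : Subring K'} {t y : K'} (hy : y ∈ R) : y ∈ R.adjoinElt t :=
  Subring.subset_closure (Or.inl hy)

theorem self_mem_adjoinElt (R : Subring K') (t : K') : t ∈ R.adjoinElt t :=
  Subring.subset_closure (Or.inr rfl)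

theorem adjoinElt_le {R S : Subring K'} {t : K'} (hRS : R ≤ S) (ht : t ∈ S) :
    R.adjoinElt t ≤ S := by
  rw [Subring.adjoinElt, Subring.closure_le]
  rintro y (hy | rfl)
  · exact hRS hy
  · exact ht

theorem locSet_mono {R S : Subring K'} (hRS : R ≤ S) : locSet V' R ⊆ locSet V' S := by
  rintro z ⟨a, ha, b, hb, hbv, rfl⟩
  exact ⟨a, hRS ha, b, hRS hb, hbv, rfl⟩

end Lem32

namespace Lem32

/-- From pairwise eventual comparability, extract a single eventually-dominant index. -/
theorem exists_dominant {Γ : Type*} [LinearOrder Γ] {lam : Ordinal.{0}} (hlam : Order.IsSuccLimit lam)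
    (T : ℕ → Ordinal.{0} → Γ) (s : Finset ℕ) (hs : s.Nonempty)
    (hpair : ∀ k ∈ s, ∀ k' ∈ s, k ≠ k' → ∃ i₁ < lam,
      (∀ i, i₁ ≤ i → i < lam → T k' i < T k i) ∨ (∀ i, i₁ ≤ i → i < lam → T k i < T k' i)) :
    ∃ i₀ < lam, ∃ k₀ ∈ s, ∀ i, i₀ ≤ i → i < lam → ∀ k ∈ s, k ≠ k₀ → T k i < T k₀ i := by
  revert hpair
  induction hs using Finset.Nonempty.cons_induction with
  | singleton a =>
    intro hpair
    exact ⟨0, hlam.pos, a, Finset.mem_singleton_self a, by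
      intro i _ _ k hk hka
      exact absurd (Finset.mem_singleton.1 hk) hka⟩
  | cons a t ha hts ih =>
    intro hpair
    obtain ⟨i₁, hi₁, k₁, hk₁, H⟩ := ih (fun k hk k' hk' hne =>
      hpair k (Finset.mem_cons_of_mem hk) k' (Finset.mem_cons_of_mem hk') hne)
    have hak₁ : a ≠ k₁ := fun heq => ha (heq ▸ hk₁)
    obtain ⟨i₂, hi₂, hcase⟩ := hpair a (Finset.mem_cons_self a t) k₁
      (Finset.mem_cons_of_mem hk₁) hak₁
    rcases hcase with hA | hB
    · -- a dominates k₁ : a is the winner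
      refine ⟨max i₁ i₂, max_lt hi₁ hi₂, a, Finset.mem_cons_self a t, ?_⟩
      intro i hi hilam k hk hka
      rcases Finset.mem_cons.1 hk with rfl | hkt
      · exact absurd rfl hka
      rcases eq_or_ne k k₁ with rfl | hkk₁
      · exact hA i (le_trans (le_max_right _ _) hi) hilam
      · exact lt_trans (H i (le_trans (le_max_left _ _) hi) hilam k hkt hkk₁)
          (hA i (le_trans (le_max_right _ _) hi) hilam)
    · -- k₁ dominates a
      refine ⟨max i₁ i₂, max_lt hi₁ hi₂, k₁, Finset.mem_cons_of_mem hk₁, ?_⟩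
      intro i hi hilam k hk hkk₁
      rcases Finset.mem_cons.1 hk with rfl | hkt
      · exact hB i (le_trans (le_max_right _ _) hi) hilam
      · exact H i (le_trans (le_max_left _ _) hi) hilam k hkt hkk₁

end Lem32

namespace Lem32

variable {K' : Type u} [Field K'] {V' : ValuationSubring K'} {K : Subfield K'}
variable {lam : Ordinal.{0}} {v : Ordinal.{0} → K'} {x : K'}

section mono
variable (hlam : Order.IsSuccLimit lam) (hxlim : IsPseudoLimit V' lam v x)
  (hvK : ∀ i < lam, v i ∈ K)
include hlam hxlim hvK

theorem v_mem_K {i : Ordinal} (hi : i < lam) : v i ∈ K := hvK i hi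

theorem delta_mem_K {i : Ordinal} (hi : i < lam) : v (i + 1) - v i ∈ K :=
  sub_mem (hvK _ (succ_lt hlam hi)) (hvK _ hi)

/-- `x_i ∈ V[x_j]` for `i ≤ j`. -/
theorem xi_mem_adjoin_xj {i j : Ordinal} (hij : i ≤ j) (hj : j < lam) :
    (x - v i) / (v (i + 1) - v i) ∈
      (valRing V' K).adjoinElt ((x - v j) / (v (j + 1) - v j)) := by
  rcases eq_or_lt_of_le hij with rfl | hij
  · exact self_mem_adjoinElt _ _
  have hi : i < lam := hij.trans hj
  have hdi : v (i + 1) - v i ≠ 0 := delta_ne hlam hxlim hi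
  have hdj : v (j + 1) - v j ≠ 0 := delta_ne hlam hxlim hj
  set α : K' := (v (j + 1) - v j) / (v (i + 1) - v i) with hα
  set β : K' := (v j - v i) / (v (i + 1) - v i) with hβ
  have key : (x - v i) / (v (i + 1) - v i)
      = α * ((x - v j) / (v (j + 1) - v j)) + β := by
    have h1 : α * ((x - v j) / (v (j + 1) - v j)) = (x - v j) / (v (i + 1) - v i) := by
      rw [hα, div_mul_div_comm, mul_comm, mul_div_mul_right _ _ hdj]
    rw [h1, hβ, ← add_div]
    congr 1
    ring
  have hαval : V'.valuation α ≤ 1 := by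
    rw [hα, Valuation.map_div, val_delta hlam hxlim hi, val_delta hlam hxlim hj,
      div_le_one₀ (zero_lt_iff.2 (mu_ne hlam hxlim hi))]
    exact le_of_lt (mu_lt hlam hxlim hij hj)
  have hβval : V'.valuation β ≤ 1 := by
    rw [hβ, Valuation.map_div, val_delta hlam hxlim hi, val_v_sub_v hlam hxlim hij hj,
      div_self (mu_ne hlam hxlim hi)]
  have hαmem : α ∈ valRing V' K := mem_valRing_iff.2
    ⟨V'.mem_of_valuation_le_one _ hαval,
     div_mem (delta_mem_K hlam hxlim hvK hj) (delta_mem_K hlam hxlim hvK hi)⟩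
  have hβmem : β ∈ valRing V' K := mem_valRing_iff.2
    ⟨V'.mem_of_valuation_le_one _ hβval,
     div_mem (sub_mem (hvK _ hj) (hvK _ hi)) (delta_mem_K hlam hxlim hvK hi)⟩
  rw [key]
  exact add_mem (mul_mem (mem_adjoinElt_of_mem hαmem) (self_mem_adjoinElt _ _))
    (mem_adjoinElt_of_mem hβmem)

theorem adjoin_mono {i j : Ordinal} (hij : i ≤ j) (hj : j < lam) :
    (valRing V' K).adjoinElt ((x - v i) / (v (i + 1) - v i)) ≤
      (valRing V' K).adjoinElt ((x - v j) / (v (j + 1) - v j)) :=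
  adjoinElt_le (fun _ hy => mem_adjoinElt_of_mem hy) (xi_mem_adjoin_xj hlam hxlim hvK hij hj)

/-- The adjoined ring is contained in `V'`. -/
theorem adjoin_le_V' {i : Ordinal} (hi : i < lam) :
    (valRing V' K).adjoinElt ((x - v i) / (v (i + 1) - v i)) ≤ V'.toSubring :=
  adjoinElt_le (fun _ hy => (mem_valRing_iff.1 hy).1) (xi_mem_V' hlam hxlim hi)

/-- The adjoined ring is contained in `K(x)`. -/
theorem adjoin_le_Kx {i : Ordinal} (hi : i < lam) :
    ∀ y ∈ (valRing V' K).adjoinElt ((x - v i) / (v (i + 1) - v i)), y ∈ K.adjoinElt x := by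
  have hKsub : ∀ w ∈ K, w ∈ K.adjoinElt x := fun w hw => Subfield.subset_closure (Or.inl hw)
  have hx : x ∈ K.adjoinElt x := Subfield.subset_closure (Or.inr rfl)
  intro y hy
  have : (valRing V' K).adjoinElt ((x - v i) / (v (i + 1) - v i)) ≤ (K.adjoinElt x).toSubring := by
    apply adjoinElt_le
    · exact fun w hw => hKsub w (mem_valRing_iff.1 hw).2
    · show _ ∈ K.adjoinElt x
      exact div_mem (sub_mem hx (hKsub _ (hvK _ hi)))
        (sub_mem (hKsub _ (hvK _ (succ_lt hlam hi))) (hKsub _ (hvK _ hi)))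
  exact this hy

/-- Reverse inclusion: elements of a localization are in `V' ∩ K(x)`. -/
theorem locSet_subset {i : Ordinal} (hi : i < lam) {z : K'}
    (hz : z ∈ locSet V' ((valRing V' K).adjoinElt ((x - v i) / (v (i + 1) - v i)))) :
    z ∈ V' ∧ z ∈ K.adjoinElt x := by
  obtain ⟨a, ha, b, hb, hbv, rfl⟩ := hz
  have haV : a ∈ V' := adjoin_le_V' hlam hxlim hvK hi ha
  have hbV : b ∈ V' := adjoin_le_V' hlam hxlim hvK hi hb
  have hbval : V'.valuation b = 1 :=
    le_antisymm (V'.valuation_le_one ⟨b, hbV⟩) (not_lt.1 hbv)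
  constructor
  · apply V'.mem_of_valuation_le_one
    rw [Valuation.map_div, hbval, div_one]
    exact V'.valuation_le_one ⟨a, haV⟩
  · exact div_mem (adjoin_le_Kx hlam hxlim hvK hi a ha) (adjoin_le_Kx hlam hxlim hvK hi b hb)

end mono
end Lem32

namespace Lem32

variable {K' : Type u} [Field K'] {V' : ValuationSubring K'} {K : Subfield K'}
variable {lam : Ordinal.{0}} {v : Ordinal.{0} → K'} {x : K'}

/-- Valuation of a sum with a strictly dominant term. -/
theorem val_sum_eq {Γ₀ : Type*} [LinearOrderedCommGroupWithZero Γ₀] (w : Valuation K' Γ₀)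
    {s : Finset ℕ} {f : ℕ → K'} {j : ℕ} (hj : j ∈ s) (h0 : w (f j) ≠ 0)
    (hf : ∀ i ∈ s, i ≠ j → w (f i) < w (f j)) : w (∑ i ∈ s, f i) = w (f j) := by
  rw [← Finset.add_sum_erase s f hj]
  apply Valuation.map_add_eq_of_lt_left
  apply Valuation.map_sum_lt _ h0
  intro i hi
  exact hf i (Finset.mem_of_mem_erase hi) (Finset.ne_of_mem_erase hi)

section dich
variable (hlam : Order.IsSuccLimit lam) (hxlim : IsPseudoLimit V' lam v x)
include hlam hxlim

/-- Strict antitonicity of `val (c) * mu i ^ m` in `i`, for `c ≠ 0`, `m ≥ 1`. -/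
theorem T_strict_anti {c : K'} (hc : c ≠ 0) {m : ℕ} (hm : m ≠ 0) {i j : Ordinal}
    (hij : i < j) (hj : j < lam) :
    V'.valuation c * V'.valuation (x - v j) ^ m
      < V'.valuation c * V'.valuation (x - v i) ^ m := by
  apply mul_lt_mul_of_pos_left _ (zero_lt_iff.2 ((Valuation.ne_zero_iff _).2 hc))
  exact pow_lt_pow_left₀ (mu_lt hlam hxlim hij hj) zero_le' hm

/-- Pairwise comparison lemma for `T k i = val (c k) * mu i ^ k`. -/
theorem pair_compare {c c' : K'} (hc : c ≠ 0) (hc' : c' ≠ 0) {k k' : ℕ} (hkk : k < k') :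
    ∃ i₁ < lam,
      (∀ i, i₁ ≤ i → i < lam →
        V'.valuation c' * V'.valuation (x - v i) ^ k'
          < V'.valuation c * V'.valuation (x - v i) ^ k) ∨
      (∀ i, i₁ ≤ i → i < lam →
        V'.valuation c * V'.valuation (x - v i) ^ k
          < V'.valuation c' * V'.valuation (x - v i) ^ k') := by
  set mu : Ordinal → _ := fun i => V'.valuation (x - v i) with hmu
  have hsplit : ∀ i, V'.valuation c' * mu i ^ k'
      = (V'.valuation c' * mu i ^ (k' - k)) * mu i ^ k := by
    intro i
    rw [mul_assoc, ← pow_add]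
    congr 2
    omega
  by_cases hE : ∃ iw, iw < lam ∧ V'.valuation c' * mu iw ^ (k' - k) ≤ V'.valuation c
  · obtain ⟨i₂, hi₂, hle⟩ := hE
    refine ⟨i₂ + 1, succ_lt hlam hi₂, Or.inl ?_⟩
    intro i hi hilam
    have hi₂i : i₂ < i := lt_of_lt_of_le (lt_succ_self i₂) hi
    have h1 : V'.valuation c' * mu i ^ (k' - k) < V'.valuation c :=
      lt_of_lt_of_le (T_strict_anti hlam hxlim hc' (by omega) hi₂i hilam) hle
    rw [hsplit i]
    exact mul_lt_mul_of_pos_right h1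
      (zero_lt_iff.2 (pow_ne_zero _ (mu_ne hlam hxlim hilam)))
  · push_neg at hE
    refine ⟨0, hlam.pos, Or.inr ?_⟩
    intro i hi hilam
    rw [hsplit i]
    exact mul_lt_mul_of_pos_right (hE i hilam)
      (zero_lt_iff.2 (pow_ne_zero _ (mu_ne hlam hxlim hilam)))

/-- The dichotomy: a nonzero polynomial is either eventually strictly increasing in value
along the sequence, or its Taylor expansion at `x` is eventually dominated by the
constant term. -/
theorem dichotomy (f : Polynomial K') (hf : f ≠ 0) :
    EvalValStrictMono V' lam v f ∨
    (f.eval x ≠ 0 ∧ ∃ i₀ < lam, ∀ i, i₀ ≤ i → i < lam → ∀ k : ℕ, 1 ≤ k →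
      V'.valuation ((taylor x f).coeff k) * V'.valuation (x - v i) ^ k
        < V'.valuation (f.eval x)) := by
  have htne : taylor x f ≠ 0 := fun h0 => hf (taylor_injective x (by simp [h0]))
  set c : ℕ → K' := fun k => (taylor x f).coeff k with hcdef
  set n := f.natDegree with hn
  set supp : Finset ℕ := (taylor x f).support with hsupp
  have hsne : supp.Nonempty := Polynomial.nonempty_support_iff.2 htne
  have hcsupp : ∀ k ∈ supp, c k ≠ 0 := fun k hk => Polynomial.mem_support_iff.1 hk
  have hsupp_le : ∀ k ∈ supp, k < n + 1 := by
    intro k hk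
    have := Polynomial.le_natDegree_of_ne_zero (Polynomial.mem_support_iff.1 hk)
    rw [natDegree_taylor] at this
    omega
  have hpairs : ∀ k ∈ supp, ∀ k' ∈ supp, k ≠ k' → ∃ i₁ < lam,
      (∀ i, i₁ ≤ i → i < lam →
        V'.valuation (c k') * V'.valuation (x - v i) ^ k'
          < V'.valuation (c k) * V'.valuation (x - v i) ^ k) ∨
      (∀ i, i₁ ≤ i → i < lam →
        V'.valuation (c k) * V'.valuation (x - v i) ^ k
          < V'.valuation (c k') * V'.valuation (x - v i) ^ k') := by
    intro k hk k' hk' hne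
    rcases lt_or_gt_of_ne hne with hlt | hgt
    · obtain ⟨i₁, hi₁, hor⟩ := pair_compare hlam hxlim (hcsupp k hk) (hcsupp k' hk') hlt
      exact ⟨i₁, hi₁, hor⟩
    · obtain ⟨i₁, hi₁, hor⟩ := pair_compare hlam hxlim (hcsupp k' hk') (hcsupp k hk) hgt
      exact ⟨i₁, hi₁, hor.symm⟩
  obtain ⟨i₀, hi₀, k₀, hk₀, hdom⟩ := exists_dominant hlam
    (fun k i => V'.valuation (c k) * V'.valuation (x - v i) ^ k) supp hsne hpairs
  have hsum : ∀ i, i < lam → f.eval (v i) = ∑ k ∈ Finset.range (n + 1), c k * (v i - x) ^ k := by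
    intro i _
    rw [← taylor_eval_sub x f (v i),
      eval_eq_sum_range' (n := n + 1) (by rw [natDegree_taylor]; omega) (v i - x)]
  have hterm : ∀ i, i < lam → ∀ k : ℕ, V'.valuation (c k * (v i - x) ^ k)
      = V'.valuation (c k) * V'.valuation (x - v i) ^ k := by
    intro i _ k
    rw [Valuation.map_mul, Valuation.map_pow, Valuation.map_sub_swap]
  have hdom' : ∀ i, i₀ ≤ i → i < lam → ∀ k, k ≠ k₀ →
      V'.valuation (c k) * V'.valuation (x - v i) ^ k
        < V'.valuation (c k₀) * V'.valuation (x - v i) ^ k₀ := by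
    intro i hi hilam k hk
    by_cases hck : c k = 0
    · rw [hck, map_zero, zero_mul]
      exact zero_lt_iff.2 (mul_ne_zero ((Valuation.ne_zero_iff _).2 (hcsupp k₀ hk₀))
        (pow_ne_zero _ (mu_ne hlam hxlim hilam)))
    · exact hdom i hi hilam k (Polynomial.mem_support_iff.2 hck) hk
  have hvalf : ∀ i, i₀ ≤ i → i < lam →
      V'.valuation (f.eval (v i)) = V'.valuation (c k₀) * V'.valuation (x - v i) ^ k₀ := by
    intro i hi hilam
    rw [hsum i hilam, ← hterm i hilam k₀]
    apply val_sum_eq _ (Finset.mem_range.2 (hsupp_le k₀ hk₀))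
    · rw [hterm i hilam k₀]
      exact mul_ne_zero ((Valuation.ne_zero_iff _).2 (hcsupp k₀ hk₀))
        (pow_ne_zero _ (mu_ne hlam hxlim hilam))
    · intro k _ hk
      rw [hterm i hilam k, hterm i hilam k₀]
      exact hdom' i hi hilam k hk
  rcases Nat.eq_zero_or_pos k₀ with hk₀0 | hk₀pos
  · -- constant term dominates : case B
    right
    subst hk₀0
    have hc0 : c 0 ≠ 0 := hcsupp 0 hk₀
    have hc0x : c 0 = f.eval x := taylor_coeff_zero x f
    constructor
    · rw [← hc0x]; exact hc0
    refine ⟨i₀, hi₀, ?_⟩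
    intro i hi hilam k hk1
    have := hdom' i hi hilam k (by omega)
    rw [pow_zero, mul_one, hc0x] at this
    exact this
  · -- case A : strictly increasing values
    left
    refine ⟨i₀, hi₀, ?_⟩
    intro i j hi hij hjlam
    have hilam : i < lam := hij.trans hjlam
    show V'.valuation (f.eval (v j)) < V'.valuation (f.eval (v i))
    rw [hvalf i hi hilam, hvalf j (hi.trans hij.le) hjlam]
    exact T_strict_anti hlam hxlim (hcsupp k₀ hk₀) (by omega) hij hjlam

end dich
end Lem32

namespace Lem32

variable {K' : Type u} [Field K'] {V' : ValuationSubring K'} {K : Subfield K'}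
variable {lam : Ordinal.{0}} {v : Ordinal.{0} → K'} {x : K'}

theorem eval_mem_subfield {g : Polynomial K'} (hg : CoeffsIn (↑K) g) {r : K'} (hr : r ∈ K) :
    g.eval r ∈ K := by
  rw [Polynomial.eval_eq_sum_range]
  exact sum_mem (fun k _ => mul_mem (hg k) (pow_mem hr k))

theorem coeffsIn_hasseDeriv {g : Polynomial K'} (hg : CoeffsIn (↑K) g) (k : ℕ) :
    CoeffsIn (↑K) (hasseDeriv k g) := by
  intro m
  rw [Polynomial.hasseDeriv_coeff]
  exact mul_mem (natCast_mem K _) (hg (m + k))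

theorem taylor_coeff_mem {g : Polynomial K'} (hg : CoeffsIn (↑K) g) {r : K'} (hr : r ∈ K)
    (k : ℕ) : (taylor r g).coeff k ∈ K := by
  rw [Polynomial.taylor_coeff]
  exact eval_mem_subfield (coeffsIn_hasseDeriv hg k) hr

theorem val_natCast_le_one (N : ℕ) : V'.valuation (N : K') ≤ 1 :=
  V'.valuation_le_one ⟨(N : K'), natCast_mem V' N⟩

section caseB
variable (hlam : Order.IsSuccLimit lam) (hxlim : IsPseudoLimit V' lam v x)
  (hvK : ∀ i < lam, v i ∈ K)
include hlam hxlim hvK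

theorem caseB_main {f : Polynomial K'} (hfK : CoeffsIn (↑K) f) (hfx : f.eval x ≠ 0)
    {i₀ : Ordinal} (hi₀ : i₀ < lam)
    (hB : ∀ i, i₀ ≤ i → i < lam → ∀ k : ℕ, 1 ≤ k →
      V'.valuation ((taylor x f).coeff k) * V'.valuation (x - v i) ^ k
        < V'.valuation (f.eval x))
    {i : Ordinal} (hi : i₀ ≤ i) (hilam : i < lam) :
    V'.valuation (f.eval (v i)) = V'.valuation (f.eval x) ∧
    f.eval (v i) ∈ K ∧ f.eval (v i) ≠ 0 ∧
    f.eval x / f.eval (v i) ∈ (valRing V' K).adjoinElt ((x - v i) / (v (i + 1) - v i)) := by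
  set c : ℕ → K' := fun k => (taylor x f).coeff k with hcdef
  set n := f.natDegree with hn
  have hc0 : c 0 = f.eval x := taylor_coeff_zero x f
  have hfx' : V'.valuation (f.eval x) ≠ 0 := (Valuation.ne_zero_iff _).2 hfx
  -- Step 1 : value of f (v i)
  have hval : V'.valuation (f.eval (v i)) = V'.valuation (f.eval x) := by
    have hsum : f.eval (v i) = ∑ k ∈ Finset.range (n + 1), c k * (v i - x) ^ k := by
      rw [← taylor_eval_sub x f (v i),
        eval_eq_sum_range' (n := n + 1) (by rw [natDegree_taylor]; omega) (v i - x)]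
    rw [hsum]
    have h0mem : 0 ∈ Finset.range (n + 1) := Finset.mem_range.2 (by omega)
    have := val_sum_eq V'.valuation (f := fun k => c k * (v i - x) ^ k) h0mem
      (by simpa [hc0] using hfx')
      (by
        intro k _ hk0
        have hterm : V'.valuation (c k * (v i - x) ^ k)
            = V'.valuation (c k) * V'.valuation (x - v i) ^ k := by
          rw [Valuation.map_mul, Valuation.map_pow, Valuation.map_sub_swap]
        rw [hterm]
        have := hB i hi hilam k (by omega)
        simpa [hc0] using this)
    simpa [hc0] using this
  have hfvi_ne : f.eval (v i) ≠ 0 := by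
    intro h0
    rw [h0, map_zero] at hval
    exact hfx' hval.symm
  have hfviK : f.eval (v i) ∈ K := eval_mem_subfield hfK (hvK i hilam)
  refine ⟨hval, hfviK, hfvi_ne, ?_⟩
  -- Step 2 : the Taylor coefficients of f at v i
  set d : ℕ → K' := fun k => (taylor (v i) f).coeff k with hddef
  have hdsum : ∀ k : ℕ, d k = ∑ m ∈ Finset.range (n + 1),
      (((m + k).choose m : K') * c (m + k)) * (v i - x) ^ m := by
    intro k
    have h1 : d k = (hasseDeriv k f).eval (v i) := Polynomial.taylor_coeff (v i) f k
    have h2 : (hasseDeriv k f).eval (v i) = (taylor x (hasseDeriv k f)).eval (v i - x) :=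
      (taylor_eval_sub x (hasseDeriv k f) (v i)).symm
    have hdeg : (taylor x (hasseDeriv k f)).natDegree < n + 1 := by
      rw [natDegree_taylor]
      have := Polynomial.natDegree_hasseDeriv_le f k
      omega
    rw [h1, h2, eval_eq_sum_range' hdeg (v i - x)]
    apply Finset.sum_congr rfl
    intro m _
    congr 1
    rw [Polynomial.taylor_coeff]
    have h3 : hasseDeriv m (hasseDeriv k f) = (m + k).choose m • hasseDeriv (m + k) f := by
      have := Polynomial.hasseDeriv_comp (R := K') m k
      exact congrFun (congrArg DFunLike.coe this) f
    rw [h3]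
    have : ((m + k).choose m • hasseDeriv (m + k) f)
        = ((((m + k).choose m : ℕ) : Polynomial K') * hasseDeriv (m + k) f) := by
      rw [nsmul_eq_mul]
    rw [this, eval_mul, eval_natCast]
    show _ = _ * (taylor x f).coeff (m + k)
    rw [Polynomial.taylor_coeff]
  -- Step 3 : the value bound for the coefficients at v i
  have hdb : ∀ k : ℕ, 1 ≤ k →
      V'.valuation (d k * (x - v i) ^ k) < V'.valuation (f.eval x) := by
    intro k hk1
    rw [hdsum k, Finset.sum_mul]
    apply Valuation.map_sum_lt _ hfx'
    intro m _
    have hsw : V'.valuation (v i - x) = V'.valuation (x - v i) := V'.valuation.map_sub_swap _ _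
    have hterm : V'.valuation ((((m + k).choose m : K') * c (m + k)) * (v i - x) ^ m
        * (x - v i) ^ k)
        = V'.valuation (((m + k).choose m : K'))
          * (V'.valuation (c (m + k)) * V'.valuation (x - v i) ^ (m + k)) := by
      simp only [Valuation.map_mul, Valuation.map_pow, hsw, pow_add, mul_assoc]
    rw [hterm]
    calc V'.valuation (((m + k).choose m : K'))
          * (V'.valuation (c (m + k)) * V'.valuation (x - v i) ^ (m + k))
        ≤ 1 * (V'.valuation (c (m + k)) * V'.valuation (x - v i) ^ (m + k)) :=
          mul_le_mul_left (val_natCast_le_one _) _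
      _ = V'.valuation (c (m + k)) * V'.valuation (x - v i) ^ (m + k) := one_mul _
      _ < V'.valuation (f.eval x) := hB i hi hilam (m + k) (by omega)
  -- Step 4 : membership
  have hdelta_ne : v (i + 1) - v i ≠ 0 := delta_ne hlam hxlim hilam
  set ξ : K' := (x - v i) / (v (i + 1) - v i) with hxidef
  have hxv : x - v i = (v (i + 1) - v i) * ξ := by
    rw [hxidef, mul_div_cancel₀ _ hdelta_ne]
  have hP : f.eval x / f.eval (v i) = ∑ k ∈ Finset.range (n + 1),
      (d k * (v (i + 1) - v i) ^ k / f.eval (v i)) * ξ ^ k := by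
    have hsum : f.eval x = ∑ k ∈ Finset.range (n + 1), d k * (x - v i) ^ k := by
      rw [← taylor_eval_sub (v i) f x,
        eval_eq_sum_range' (n := n + 1) (by rw [natDegree_taylor]; omega) (x - v i)]
    rw [hsum, Finset.sum_div]
    apply Finset.sum_congr rfl
    intro k _
    rw [hxv, mul_pow]
    ring
  rw [hP]
  apply sum_mem
  intro k _
  apply mul_mem _ (pow_mem (self_mem_adjoinElt _ _) k)
  apply mem_adjoinElt_of_mem
  apply mem_valRing_iff.2
  constructor
  · -- in V'
    apply V'.mem_of_valuation_le_one
    have hvd : V'.valuation (d k * (v (i + 1) - v i) ^ k)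
        = V'.valuation (d k * (x - v i) ^ k) := by
      rw [Valuation.map_mul, Valuation.map_mul, Valuation.map_pow, Valuation.map_pow,
        val_delta hlam hxlim hilam]
    rw [Valuation.map_div, hvd]
    have hF : V'.valuation (f.eval (v i)) ≠ 0 := (Valuation.ne_zero_iff V'.valuation).2 hfvi_ne
    rcases Nat.eq_zero_or_pos k with rfl | hk1
    · have hd0 : d 0 = f.eval (v i) := taylor_coeff_zero (v i) f
      rw [hd0, pow_zero, mul_one]
      exact le_of_eq (div_self hF)
    · rw [div_le_one₀ (zero_lt_iff.2 hF)]
      rw [hval]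
      exact le_of_lt (hdb k hk1)
  · -- in K
    exact div_mem (mul_mem (taylor_coeff_mem hfK (hvK i hilam) k)
      (pow_mem (delta_mem_K hlam hxlim hvK hilam) k)) hfviK

end caseB
end Lem32

namespace Lem32

variable {K' : Type u} [Field K'] {V' : ValuationSubring K'} {K : Subfield K'}
variable {lam : Ordinal.{0}} {v : Ordinal.{0} → K'} {x : K'}

/-- Every element of `K(x)` is of the form `p(x)/q(x)` with `p, q` polynomials over the
subring `K.toSubring`. -/
theorem exists_rep {z : K'} (hz : z ∈ K.adjoinElt x) :
    ∃ p q : Polynomial K.toSubring,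
      Polynomial.eval₂ K.toSubring.subtype x q ≠ 0 ∧
      z = Polynomial.eval₂ K.toSubring.subtype x p / Polynomial.eval₂ K.toSubring.subtype x q := by
  let ev : Polynomial K.toSubring →+* K' := Polynomial.eval₂RingHom K.toSubring.subtype x
  have hev : ∀ p : Polynomial K.toSubring, ev p = Polynomial.eval₂ K.toSubring.subtype x p :=
    fun p => rfl
  suffices hgen : ∃ p q : Polynomial K.toSubring, ev q ≠ 0 ∧ z = ev p / ev q by
    obtain ⟨p, q, h1, h2⟩ := hgen
    exact ⟨p, q, h1, h2⟩
  refine Subfield.closure_induction ?_ ?_ ?_ ?_ ?_ ?_ hz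
  · rintro y (hy | rfl)
    · exact ⟨C ⟨y, hy⟩, 1, by simp [ev], by simp [ev]⟩
    · exact ⟨X, 1, by simp [ev], by simp [ev]⟩
  · exact ⟨1, 1, by simp [ev], by simp [ev]⟩
  · rintro a b _ _ ⟨p₁, q₁, hq₁, rfl⟩ ⟨p₂, q₂, hq₂, rfl⟩
    refine ⟨p₁ * q₂ + p₂ * q₁, q₁ * q₂, by simp [mul_ne_zero hq₁ hq₂], ?_⟩
    rw [ev.map_add, ev.map_mul, ev.map_mul, ev.map_mul]
    rw [div_add_div _ _ hq₁ hq₂, mul_comm (ev q₁) (ev p₂)]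
  · rintro a _ ⟨p, q, hq, rfl⟩
    exact ⟨-p, q, hq, by rw [ev.map_neg, neg_div]⟩
  · rintro a _ ⟨p, q, hq, rfl⟩
    by_cases hp : ev p = 0
    · exact ⟨0, 1, by simp, by simp [hp]⟩
    · exact ⟨q, p, hp, by rw [inv_div]⟩
  · rintro a b _ _ ⟨p₁, q₁, hq₁, rfl⟩ ⟨p₂, q₂, hq₂, rfl⟩
    exact ⟨p₁ * p₂, q₁ * q₂, by simp [mul_ne_zero hq₁ hq₂], by
      rw [ev.map_mul, ev.map_mul, div_mul_div_comm]⟩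

/-- Reduction modulo the monic polynomial `h` with coefficients in `K`. -/
theorem reduce {h : Polynomial K'} (hmonic : h.Monic) (hhK : CoeffsIn (↑K) h)
    (hhx : h.eval x = 0) (p : Polynomial K.toSubring) :
    ∃ f : Polynomial K', CoeffsIn (↑K) f ∧ f.degree < h.degree ∧
      f.eval x = Polynomial.eval₂ K.toSubring.subtype x p := by
  have hcoeffs : (↑h.coeffs : Set K') ⊆ (K.toSubring : Set K') := by
    intro c hc
    obtain ⟨n, _, rfl⟩ := Polynomial.mem_coeffs_iff.1 hc
    exact hhK n
  set H : Polynomial K.toSubring := h.toSubring K.toSubring hcoeffs with hHdef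
  have hHmonic : H.Monic := (Polynomial.monic_toSubring _ _ _).2 hmonic
  have hHmap : H.map K.toSubring.subtype = h := by
    ext n
    rw [Polynomial.coeff_map]
    exact Polynomial.coeff_toSubring h K.toSubring hcoeffs
  have hsubinj : Function.Injective K.toSubring.subtype := fun a b hab => Subtype.ext hab
  set r := p %ₘ H with hrdef
  refine ⟨r.map K.toSubring.subtype, ?_, ?_, ?_⟩
  · intro n
    rw [Polynomial.coeff_map]
    exact (r.coeff n).2
  · rw [Polynomial.degree_map_eq_of_injective hsubinj]
    calc r.degree < H.degree := Polynomial.degree_modByMonic_lt p hHmonic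
      _ = h.degree := by rw [← hHmap, Polynomial.degree_map_eq_of_injective hsubinj]
  · have hev : ∀ g : Polynomial K.toSubring,
        (g.map K.toSubring.subtype).eval x = Polynomial.eval₂ K.toSubring.subtype x g :=
      fun g => Polynomial.eval_map _ x
    rw [hev r]
    have hdiv : r = p - H * (p /ₘ H) := by
      rw [hrdef, eq_sub_iff_add_eq]
      exact Polynomial.modByMonic_add_div p H
    have hevH : Polynomial.eval₂ K.toSubring.subtype x H = 0 := by
      rw [← hev H, hHmap]
      exact hhx
    rw [hdiv]
    have : ∀ a b : Polynomial K.toSubring, Polynomial.eval₂ K.toSubring.subtype x (a - b)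
        = Polynomial.eval₂ K.toSubring.subtype x a - Polynomial.eval₂ K.toSubring.subtype x b :=
      fun a b => by
        have := (Polynomial.eval₂RingHom K.toSubring.subtype x).map_sub a b
        exact this
    have hmul : Polynomial.eval₂ K.toSubring.subtype x (H * (p /ₘ H))
        = Polynomial.eval₂ K.toSubring.subtype x H
          * Polynomial.eval₂ K.toSubring.subtype x (p /ₘ H) :=
      (Polynomial.eval₂RingHom K.toSubring.subtype x).map_mul H (p /ₘ H)
    rw [this, hmul, hevH, zero_mul, sub_zero]

/-- Rescaling a nonzero polynomial with coefficients in `K` so that its coefficients lie in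
`valRing V' K`, preserving degree and the strict-increase property. -/
theorem scale_coeffs {f : Polynomial K'} (hf : f ≠ 0) (hfK : CoeffsIn (↑K) f)
    (V' : ValuationSubring K') {lam : Ordinal.{0}} {v : Ordinal.{0} → K'} :
    ∃ f' : Polynomial K', CoeffsIn (↑(valRing V' K)) f' ∧ f'.degree = f.degree ∧
      (EvalValStrictMono V' lam v f → EvalValStrictMono V' lam v f') := by
  obtain ⟨k₀, hk₀mem, hk₀max⟩ := Finset.exists_max_image (Finset.range (f.natDegree + 1))
    (fun k => V'.valuation (f.coeff k)) ⟨0, Finset.mem_range.2 (by omega)⟩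
  set c := f.coeff k₀ with hcdef
  have hlead : V'.valuation f.leadingCoeff ≤ V'.valuation c :=
    hk₀max f.natDegree (Finset.mem_range.2 (by omega))
  have hc0 : c ≠ 0 := by
    intro h0
    rw [h0, map_zero, le_zero_iff] at hlead
    exact Polynomial.leadingCoeff_ne_zero.2 hf ((Valuation.zero_iff _).1 hlead)
  have hcval : V'.valuation c ≠ 0 := (Valuation.ne_zero_iff _).2 hc0
  have hcK : c ∈ K := hfK k₀
  refine ⟨C c⁻¹ * f, ?_, Polynomial.degree_C_mul (inv_ne_zero hc0), ?_⟩
  · intro n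
    rw [Polynomial.coeff_C_mul]
    apply mem_valRing_iff.2
    constructor
    · apply V'.mem_of_valuation_le_one
      rcases le_or_gt n f.natDegree with hn | hn
      · rw [inv_mul_eq_div, Valuation.map_div, div_le_one₀ (zero_lt_iff.2 hcval)]
        exact hk₀max n (Finset.mem_range.2 (by omega))
      · rw [Polynomial.coeff_eq_zero_of_natDegree_lt hn, mul_zero, map_zero]
        exact zero_le'
    · exact mul_mem (inv_mem hcK) (hfK n)
  · rintro ⟨i₀, hi₀, hmono⟩
    refine ⟨i₀, hi₀, ?_⟩
    intro i j hi hij hj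
    have := hmono i j hi hij hj
    show V'.valuation ((C c⁻¹ * f).eval (v j)) < V'.valuation ((C c⁻¹ * f).eval (v i))
    rw [Polynomial.eval_mul, Polynomial.eval_mul, Polynomial.eval_C, Polynomial.eval_C,
      Valuation.map_mul, Valuation.map_mul]
    exact mul_lt_mul_of_pos_left this
      (zero_lt_iff.2 ((Valuation.ne_zero_iff _).2 (inv_ne_zero hc0)))

end Lem32

open Lem32

/-- **Lemma 3(2) of the paper, explicit form.** With the hypotheses of Lemma 3(2),
`V'' = V' ∩ K(x)` equals the union over `i < lam` of the localizations
`V[x_i]_{m' ∩ V[x_i]}` with `x_i = (x - v i)/(v (i+1) - v i)`, and this family of subrings is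
filtered increasing. -/
theorem valRing_adjoin_eq_union_localizations
    {K' : Type u} [Field K'] (V' : ValuationSubring K') (K : Subfield K')
    (himm : IsImmediateExtension V' K)
    (lam : Ordinal.{0}) (hlam : Order.IsSuccLimit lam) (v : Ordinal.{0} → K')
    (hvK : ∀ i < lam, v i ∈ K)
    (hpc : IsPseudoConvergent V' lam v)
    (halgseq : IsAlgebraicSeq V' (↑K) lam v)
    (x : K') (hxV' : x ∈ V') (hxlim : IsPseudoLimit V' lam v x)
    (hxalg : ∃ f : Polynomial K', f ≠ 0 ∧ CoeffsIn (↑(valRing V' K)) f ∧ f.eval x = 0)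
    (hnoK : ∀ w ∈ K, ¬ IsPseudoLimit V' lam v w)
    (h : Polynomial K') (hmonic : h.Monic) (hhK : CoeffsIn (↑K) h) (hhx : h.eval x = 0)
    (hminpoly : ∀ f : Polynomial K', f ≠ 0 → CoeffsIn (↑K) f → f.eval x = 0 →
      h.degree ≤ f.degree)
    (hhV : CoeffsIn (↑(valRing V' K)) h)
    (hEV : EvalValStrictMono V' lam v h)
    (hdegmin : ∀ f : Polynomial K', CoeffsIn (↑(valRing V' K)) f →
      EvalValStrictMono V' lam v f → h.degree ≤ f.degree) :
    (∀ z : K', (z ∈ V' ∧ z ∈ K.adjoinElt x) ↔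
      ∃ i < lam, z ∈ locSet V' ((valRing V' K).adjoinElt ((x - v i) / (v (i + 1) - v i)))) ∧
    (∀ i j : Ordinal, i ≤ j → j < lam →
      locSet V' ((valRing V' K).adjoinElt ((x - v i) / (v (i + 1) - v i))) ⊆
        locSet V' ((valRing V' K).adjoinElt ((x - v j) / (v (j + 1) - v j)))) := by
  -- no polynomial of degree < deg h with coefficients in K is strictly increasing in value
  have hnoA : ∀ f : Polynomial K', f ≠ 0 → CoeffsIn (↑K) f → f.degree < h.degree →
      ¬ EvalValStrictMono V' lam v f := by
    intro f hf hfK hfd hEVf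
    obtain ⟨f', hf'V, hf'deg, hf'EV⟩ := scale_coeffs hf hfK V' (lam := lam) (v := v)
    have := hdegmin f' hf'V (hf'EV hEVf)
    rw [hf'deg] at this
    exact absurd (lt_of_le_of_lt this hfd) (lt_irrefl _)
  constructor
  · intro z
    constructor
    · rintro ⟨hzV, hzK⟩
      by_cases hz0 : z = 0
      · refine ⟨0, hlam.pos, 0, zero_mem _, 1, one_mem _, ?_, by rw [hz0, zero_div]⟩
        rw [map_one]
        exact lt_irrefl 1
      · obtain ⟨p, q, hq, hzeq⟩ := exists_rep hzK
        obtain ⟨f, hfK, hfdeg, hfev⟩ := reduce hmonic hhK hhx p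
        obtain ⟨g, hgK, hgdeg, hgev⟩ := reduce hmonic hhK hhx q
        have hgx : g.eval x ≠ 0 := by rw [hgev]; exact hq
        have hzfg : z = f.eval x / g.eval x := by rw [hzeq, hfev, hgev]
        have hfx : f.eval x ≠ 0 := by
          intro h0
          exact hz0 (by rw [hzfg, h0, zero_div])
        have hfne : f ≠ 0 := fun h0 => hfx (by rw [h0, eval_zero])
        have hgne : g ≠ 0 := fun h0 => hgx (by rw [h0, eval_zero])
        rcases dichotomy hlam hxlim f hfne with hA | ⟨-, i_f, hiflam, hBf⟩
        · exact absurd hA (hnoA f hfne hfK hfdeg)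
        rcases dichotomy hlam hxlim g hgne with hA | ⟨-, i_g, higlam, hBg⟩
        · exact absurd hA (hnoA g hgne hgK hgdeg)
        set i := max i_f i_g with hidef
        have hilam : i < lam := max_lt hiflam higlam
        obtain ⟨hfval, hfviK, hfvi0, hfmem⟩ :=
          caseB_main hlam hxlim hvK hfK hfx hiflam hBf (le_max_left _ _) hilam
        obtain ⟨hgval, hgviK, hgvi0, hgmem⟩ :=
          caseB_main hlam hxlim hvK hgK hgx higlam hBg (le_max_right _ _) hilam
        refine ⟨i, hilam, ?_⟩
        set dd := f.eval (v i) / g.eval (v i) with hdd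
        have hddK : dd ∈ K := div_mem hfviK hgviK
        have hddV : dd ∈ V' := by
          apply V'.mem_of_valuation_le_one
          rw [hdd, Valuation.map_div, hfval, hgval, ← Valuation.map_div]
          rw [← hzfg]
          exact V'.valuation_le_one ⟨z, hzV⟩
        refine ⟨dd * (f.eval x / f.eval (v i)), ?_, g.eval x / g.eval (v i), hgmem, ?_, ?_⟩
        · exact mul_mem (mem_adjoinElt_of_mem (mem_valRing_iff.2 ⟨hddV, hddK⟩)) hfmem
        · have : V'.valuation (g.eval x / g.eval (v i)) = 1 := by
            rw [Valuation.map_div, hgval, div_self ((Valuation.ne_zero_iff _).2 hgx)]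
          rw [this]
          exact lt_irrefl 1
        · rw [hzfg, hdd]
          field_simp [show f.eval (v i) ≠ 0 from hfvi0, show g.eval (v i) ≠ 0 from hgvi0]
    · rintro ⟨i, hi, hz⟩
      exact locSet_subset hlam hxlim hvK hi hz
  · intro i j hij hj
    exact locSet_mono (adjoin_mono hlam hxlim hvK hij hj)
end

section
/- Let A be a ring, B a complete intersection A-algebra, and C a complete intersection B-algebra. Then C is a complete intersection A-algebra. Concretely: if B ≅ A[X₁,…,X_n]/(f₁,…,f_r) with (f₁,…,f_r) a regular sequence in A[X₁,…,X_n], and C ≅ B[Y₁,…,Y_m]/(g₁,…,g_s) with (g₁,…,g_s) a regular sequence in B[Y₁,…,Y_m], then C ≅ A[X₁,…,X_n,Y₁,…,Y_m]/(f₁,…,f_r,G₁,…,G_s) where each G_i ∈ A[X,Y] is a lift of g_i, and (f₁,…,f_r,G₁,…,G_s) is a regular sequence in A[X₁,…,X_n,Y₁,…,Y_m]. -/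
universe u v w

open RingTheory.Sequence

lemma isWeaklyRegular_of_ringEquiv {R : Type*} {S : Type*} [CommRing R] [CommRing S]
    (e : R ≃+* S) {rs : List R} (h : IsWeaklyRegular R rs) :
    IsWeaklyRegular S (rs.map e) := by
  refine (AddEquiv.isWeaklyRegular_congr (e := e.toAddEquiv) ?_).mp h
  exact List.forall₂_map_right_iff.mpr <| List.forall₂_same.mpr fun r _ x => by
    simpa [smul_eq_mul] using e.map_mul r x

set_option synthInstance.maxHeartbeats 1000000 in
lemma rename_inr_isWeaklyRegular (A : Type u) [CommRing A]
    {n m r : ℕ} (f : Fin r → MvPolynomial (Fin n) A)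
    (hf : IsWeaklyRegular (MvPolynomial (Fin n) A) (List.ofFn f)) :
    IsWeaklyRegular (MvPolynomial (Fin m ⊕ Fin n) A)
      (List.ofFn fun i => MvPolynomial.rename (Sum.inr : Fin n → Fin m ⊕ Fin n) (f i)) := by
  let P := MvPolynomial (Fin n) A
  let T := MvPolynomial (Fin m) P
  haveI : Module.Flat P T := inferInstance
  have h1 : IsWeaklyRegular T (List.ofFn f) :=
    ((TensorProduct.rid P T).isWeaklyRegular_congr (List.ofFn f)).mp
      hf.isWeaklyRegular_lTensor
  have h2 : IsWeaklyRegular T ((List.ofFn f).map (algebraMap P T)) :=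
    (isWeaklyRegular_map_algebraMap_iff (R := P) (S := T) T (List.ofFn f)).mpr h1
  have h3 := isWeaklyRegular_of_ringEquiv
    (MvPolynomial.sumAlgEquiv A (Fin m) (Fin n)).symm.toRingEquiv h2
  have key : ∀ p : P, (MvPolynomial.sumAlgEquiv A (Fin m) (Fin n)).symm.toRingEquiv
      (algebraMap P T p) = MvPolynomial.rename Sum.inr p := fun p =>
    (AlgEquiv.symm_apply_eq _).mpr
      (AlgHom.congr_fun (MvPolynomial.sumAlgEquiv_comp_rename_inr A (Fin m) (Fin n)) p).symm
  simp only [List.map_ofFn, Function.comp_def] at h3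
  have h4 : (List.ofFn fun x => (MvPolynomial.sumAlgEquiv A (Fin m) (Fin n)).symm.toRingEquiv
      ((algebraMap P T) (f x))) = List.ofFn fun i =>
        MvPolynomial.rename (Sum.inr : Fin n → Fin m ⊕ Fin n) (f i) :=
    congrArg List.ofFn (funext fun i => key (f i))
  exact h4 ▸ h3

set_option maxHeartbeats 1000000 in
set_option synthInstance.maxHeartbeats 400000 in
/-- **Transitivity of complete intersections (Lemma 4 of the paper), explicit form.**
Let `A` be a ring, `B ≅ A[X₁,…,Xₙ]/(f₁,…,f_r)` with `(f₁,…,f_r)` a regular sequence in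
`A[X₁,…,Xₙ]`, and `C ≅ B[Y₁,…,Y_m]/(g₁,…,g_s)` with `(g₁,…,g_s)` a regular sequence in
`B[Y₁,…,Y_m]`.  Then there are lifts `G i ∈ A[X,Y]` of the `g i` along the natural map
`A[X,Y] → B[Y]` such that `(f₁,…,f_r,G₁,…,G_s)` is a regular sequence in `A[X,Y]` and
`C ≅ A[X,Y]/(f₁,…,f_r,G₁,…,G_s)`; in particular `C` is a complete intersection `A`-algebra.
(Here the variables `X` are indexed by `Sum.inr : Fin n → Fin m ⊕ Fin n` and the variables `Y`
by `Sum.inl`, a regular sequence means that each term is a nonzerodivisor modulo the previous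
ones, i.e. a weakly regular sequence, and the natural map `A[X,Y] → B[Y]` is the composition of
the isomorphism `A[X,Y] ≅ (A[X])[Y]` with the base-change `A[X] → A[X]/(f) ≅ B` of
coefficients.) -/
theorem completeIntersection_trans
    (A : Type u) (B : Type v) (C : Type w) [CommRing A] [CommRing B] [CommRing C]
    [Algebra A B] [Algebra B C] [Algebra A C] [IsScalarTower A B C]
    (n m r s : ℕ)
    (f : Fin r → MvPolynomial (Fin n) A)
    (hf : RingTheory.Sequence.IsWeaklyRegular (MvPolynomial (Fin n) A) (List.ofFn f))
    (eB : B ≃ₐ[A] MvPolynomial (Fin n) A ⧸ Ideal.span (Set.range f))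
    (g : Fin s → MvPolynomial (Fin m) B)
    (hg : RingTheory.Sequence.IsWeaklyRegular (MvPolynomial (Fin m) B) (List.ofFn g))
    (eC : C ≃ₐ[B] MvPolynomial (Fin m) B ⧸ Ideal.span (Set.range g)) :
    ∃ G : Fin s → MvPolynomial (Fin m ⊕ Fin n) A,
      (∀ i, MvPolynomial.map
          ((eB.symm.toAlgHom.toRingHom).comp (Ideal.Quotient.mk (Ideal.span (Set.range f))))
          ((MvPolynomial.sumAlgEquiv A (Fin m) (Fin n)) (G i)) = g i) ∧
      RingTheory.Sequence.IsWeaklyRegular (MvPolynomial (Fin m ⊕ Fin n) A)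
        ((List.ofFn fun i =>
            MvPolynomial.rename (Sum.inr : Fin n → Fin m ⊕ Fin n) (f i)) ++ List.ofFn G) ∧
      Nonempty (C ≃ₐ[A] MvPolynomial (Fin m ⊕ Fin n) A ⧸
        Ideal.span
          (Set.range (fun i =>
            MvPolynomial.rename (Sum.inr : Fin n → Fin m ⊕ Fin n) (f i)) ∪ Set.range G)) := by
  classical
  let I : Ideal (MvPolynomial (Fin n) A) := Ideal.span (Set.range f)
  have hI : I = Ideal.span (Set.range f) := rfl
  let h : MvPolynomial (Fin n) A →ₐ[A] B := eB.symm.toAlgHom.comp (Ideal.Quotient.mkₐ A I)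
  let ψ : MvPolynomial (Fin m) (MvPolynomial (Fin n) A) →ₐ[A] MvPolynomial (Fin m) B :=
    MvPolynomial.mapAlgHom h
  let e := MvPolynomial.sumAlgEquiv A (Fin m) (Fin n)
  let φ : MvPolynomial (Fin m ⊕ Fin n) A →ₐ[A] MvPolynomial (Fin m) B := ψ.comp e.toAlgHom
  have hh : Function.Surjective h := eB.symm.surjective.comp Ideal.Quotient.mk_surjective
  have hψ : Function.Surjective ψ := MvPolynomial.map_surjective _ hh
  have hφ : Function.Surjective φ := hψ.comp e.surjective
  set G : Fin s → MvPolynomial (Fin m ⊕ Fin n) A := fun i => Function.surjInv hφ (g i) with hGdef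
  have hG : ∀ i, φ (G i) = g i := fun i => Function.surjInv_eq hφ (g i)
  -- the kernel of φ
  have hkerh : RingHom.ker h = I := by
    ext x
    rw [RingHom.mem_ker]
    show eB.symm (Ideal.Quotient.mk I x) = 0 ↔ _
    rw [map_eq_zero_iff _ eB.symm.injective, Ideal.Quotient.eq_zero_iff_mem]
  have hkerψ : RingHom.ker ψ = Ideal.map MvPolynomial.C I := by
    show RingHom.ker (MvPolynomial.mapAlgHom h) = _
    rw [MvPolynomial.ker_mapAlgHom, hkerh]
  have key2 : ∀ p : MvPolynomial (Fin n) A,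
      e (MvPolynomial.rename Sum.inr p) = MvPolynomial.C p := by
    intro p
    have := AlgHom.congr_fun (MvPolynomial.sumAlgEquiv_comp_rename_inr A (Fin m) (Fin n)) p
    simpa [MvPolynomial.algebraMap_eq] using this
  have hmapJ : Ideal.map e.toAlgHom
      (Ideal.span (Set.range fun i =>
        MvPolynomial.rename (Sum.inr : Fin n → Fin m ⊕ Fin n) (f i))) =
      Ideal.map MvPolynomial.C I := by
    rw [hI, Ideal.map_span, Ideal.map_span, ← Set.range_comp, ← Set.range_comp]
    exact congrArg (Ideal.span ∘ Set.range) (funext fun i => key2 (f i))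
  have hkerφ : RingHom.ker φ = Ideal.span (Set.range fun i =>
      MvPolynomial.rename (Sum.inr : Fin n → Fin m ⊕ Fin n) (f i)) := by
    show RingHom.ker (ψ.comp e.toAlgHom) = _
    rw [← AlgHom.comap_ker ψ e.toAlgHom, hkerψ, ← hmapJ,
      Ideal.comap_map_of_surjective' e.toAlgHom e.surjective]
    have hbot : RingHom.ker (e.toAlgHom :
        MvPolynomial (Fin m ⊕ Fin n) A →ₐ[A] MvPolynomial (Fin m) (MvPolynomial (Fin n) A)) = ⊥ :=
      (RingHom.injective_iff_ker_eq_bot _).mp e.injective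
    rw [hbot, sup_bot_eq]
  refine ⟨G, ?_, ?_, ?_⟩
  · intro i
    have hring : ((eB.symm.toAlgHom.toRingHom).comp (Ideal.Quotient.mk I))
        = (h : MvPolynomial (Fin n) A →+* B) := RingHom.ext fun x => rfl
    rw [hring]
    exact (RingHom.congr_fun (MvPolynomial.mapAlgHom_coe_ringHom h) (e (G i))).symm.trans (hG i)
  · rw [RingTheory.Sequence.isWeaklyRegular_append_iff]
    refine ⟨rename_inr_isWeaklyRegular A f hf, ?_⟩
    have hofList : Ideal.ofList (List.ofFn fun i =>
        MvPolynomial.rename (Sum.inr : Fin n → Fin m ⊕ Fin n) (f i)) = RingHom.ker φ := by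
      rw [hkerφ]
      exact congrArg Ideal.span (Set.ext fun x => by simp [List.mem_ofFn, eq_comm])
    have hsm : (Ideal.ofList (List.ofFn fun i =>
        MvPolynomial.rename (Sum.inr : Fin n → Fin m ⊕ Fin n) (f i)) • ⊤ :
        Submodule (MvPolynomial (Fin m ⊕ Fin n) A) (MvPolynomial (Fin m ⊕ Fin n) A))
        = (RingHom.ker φ : Ideal (MvPolynomial (Fin m ⊕ Fin n) A)) := by
      rw [Ideal.smul_eq_mul, Ideal.mul_top, hofList]
    let ε := ((Submodule.quotEquivOfEq _ _ hsm).toAddEquiv).trans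
      (RingHom.quotientKerEquivOfSurjective (f := (φ : MvPolynomial (Fin m ⊕ Fin n) A →+*
        MvPolynomial (Fin m) B)) hφ).toAddEquiv
    have hε : ∀ z, ε (Submodule.Quotient.mk z) = φ z := by
      intro z
      show (RingHom.quotientKerEquivOfSurjective hφ)
        ((Submodule.quotEquivOfEq _ _ hsm) (Submodule.Quotient.mk z)) = φ z
      rw [Submodule.quotEquivOfEq_mk]
      exact RingHom.kerLift_mk
        (φ : MvPolynomial (Fin m ⊕ Fin n) A →+* MvPolynomial (Fin m) B) z
    refine (AddEquiv.isWeaklyRegular_congr (e := ε) ?_).mpr hg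
    rw [List.forall₂_iff_get]
    refine ⟨by simp, fun i h1 h2 => ?_⟩
    intro x
    obtain ⟨y, rfl⟩ := Submodule.Quotient.mk_surjective _ x
    rw [← Submodule.Quotient.mk_smul, hε, hε]
    simp only [List.get_ofFn]
    rw [smul_eq_mul, map_mul, hG, smul_eq_mul]
    rfl
  · let Ig : Ideal (MvPolynomial (Fin m) B) := Ideal.span (Set.range g)
    have hIg : Ig = Ideal.span (Set.range g) := rfl
    let Φ : MvPolynomial (Fin m ⊕ Fin n) A →ₐ[A] (MvPolynomial (Fin m) B) ⧸ Ig :=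
      (Ideal.Quotient.mkₐ A Ig).comp φ
    have hΦ : Function.Surjective Φ := Ideal.Quotient.mk_surjective.comp hφ
    have hkerΦ : RingHom.ker Φ = Ideal.span
        (Set.range (fun i =>
          MvPolynomial.rename (Sum.inr : Fin n → Fin m ⊕ Fin n) (f i)) ∪ Set.range G) := by
      show RingHom.ker ((Ideal.Quotient.mkₐ A Ig).comp φ) = _
      rw [← AlgHom.comap_ker (Ideal.Quotient.mkₐ A Ig) φ]
      have hmk : RingHom.ker (Ideal.Quotient.mkₐ A Ig) = Ig := by
        ext x
        simp [RingHom.mem_ker, Ideal.Quotient.eq_zero_iff_mem]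
      rw [hmk]
      have hIg2 : Ig = Ideal.map φ (Ideal.span (Set.range G)) := by
        rw [Ideal.map_span, ← Set.range_comp, hIg]
        exact congrArg (Ideal.span ∘ Set.range) (funext fun i => (hG i).symm)
      rw [hIg2, Ideal.comap_map_of_surjective' φ hφ, hkerφ, Ideal.span_union]
      exact sup_comm _ _
    exact ⟨(AlgEquiv.restrictScalars A eC).trans
      ((Ideal.quotientEquivAlgOfEq A hkerΦ.symm).trans
        (Ideal.quotientKerAlgEquivOfSurjective hΦ)).symm⟩
end

section
/- Let V ⊆ V' be an immediate extension of valuation rings with fraction field extension K ⊆ K', let (v_j)_{j<λ} be an algebraic pseudo convergent sequence in V having a pseudo limit x ∈ V' but no pseudo limit in K, and let h ∈ V[Y] have minimal degree among the polynomials f ∈ V[Y] with val(f(v_i)) < val(f(v_j)) for all large i < j < λ. Then deg h > 1. -/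
universe u

open Polynomial

/-- **Observation in the proof of Lemma 6.** Let `V ⊆ V'` be an immediate extension of
valuation rings (`V = V' ∩ K`), `(v j)_{j<lam}` an algebraic pseudo convergent sequence in `V`
with a pseudo limit `x ∈ V'` but no pseudo limit in `K`, and let `h ∈ V[Y]` have minimal degree
among the polynomials `f ∈ V[Y]` with `val (f (v i)) < val (f (v j))` for all large
`i < j < lam`. Then `deg h > 1`. -/
theorem one_lt_natDegree_of_minimal
    {K' : Type u} [Field K'] (V' : ValuationSubring K') (K : Subfield K')
    (himm : IsImmediateExtension V' K)
    (lam : Ordinal.{0}) (hlam : Order.IsSuccLimit lam) (v : Ordinal.{0} → K')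
    (hvV : ∀ j < lam, v j ∈ valRing V' K)
    (hpc : IsPseudoConvergent V' lam v)
    (halgseq : IsAlgebraicSeq V' (↑(valRing V' K)) lam v)
    (x : K') (hxV' : x ∈ V') (hxlim : IsPseudoLimit V' lam v x)
    (hnoK : ∀ w ∈ K, ¬ IsPseudoLimit V' lam v w)
    (h : Polynomial K') (hhV : CoeffsIn (↑(valRing V' K)) h)
    (hEV : EvalValStrictMono V' lam v h)
    (hdegmin : ∀ f : Polynomial K', CoeffsIn (↑(valRing V' K)) f →
      EvalValStrictMono V' lam v f → h.degree ≤ f.degree) :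
    1 < h.natDegree := by
  by_contra hcon
  push_neg at hcon
  obtain ⟨i₀, hi₀lam, hmono⟩ := hEV
  set m := V'.valuation with hm
  interval_cases hdeg : h.natDegree
  · -- degree 0: eval is constant
    have hc : h = Polynomial.C (h.coeff 0) := Polynomial.eq_C_of_natDegree_eq_zero hdeg
    have h1 : i₀ < Order.succ i₀ := Order.lt_succ i₀
    have h2 : Order.succ i₀ < lam := hlam.succ_lt hi₀lam
    have := hmono i₀ (Order.succ i₀) le_rfl h1 h2
    rw [hc] at this
    simp [ValuationSubring.ValLT] at this
  · -- degree 1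
    set a := h.coeff 1 with hadef
    set b := h.coeff 0 with hbdef
    have hne : h ≠ 0 := by
      intro h0
      rw [h0] at hdeg
      simp at hdeg
    have ha : a ≠ 0 := by
      have := Polynomial.leadingCoeff_ne_zero.mpr hne
      rwa [Polynomial.leadingCoeff, hdeg] at this
    have heq : h = Polynomial.C a * Polynomial.X + Polynomial.C b :=
      Polynomial.eq_X_add_C_of_natDegree_le_one (le_of_eq hdeg)
    set w : K' := -b / a with hwdef
    have hwK : w ∈ K := by
      have haK : a ∈ K := (hhV 1).2
      have hbK : b ∈ K := (hhV 0).2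
      exact K.div_mem (K.neg_mem hbK) haK
    have heval : ∀ y : K', h.eval y = a * (y - w) := by
      intro y
      rw [heq]
      simp only [Polynomial.eval_add, Polynomial.eval_mul, Polynomial.eval_C, Polynomial.eval_X]
      have haw : a * w = -b := by
        rw [hwdef]
        field_simp
      rw [mul_sub, haw]
      ring
    have hma : m a ≠ 0 := by simpa using ha
    -- eventual decrease of m (v i - w)
    have key : ∀ i j : Ordinal, i₀ ≤ i → i < j → j < lam →
        m (v j - w) < m (v i - w) := by
      intro i j hij hlt hjlam
      have := hmono i j hij hlt hjlam
      unfold ValuationSubring.ValLT at this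
      rw [heval, heval, Valuation.map_mul, Valuation.map_mul] at this
      exact lt_of_mul_lt_mul_left this zero_le'
    -- w is a pseudo limit, contradiction
    refine hnoK w hwK ?_
    intro i i' hii' hi'lam
    unfold ValuationSubring.ValLT
    -- choose a big index j
    set j : Ordinal := Order.succ (max i₀ i') with hjdef
    have hjlam : j < lam := hlam.succ_lt (max_lt hi₀lam hi'lam)
    have hjlam' : Order.succ j < lam := hlam.succ_lt hjlam
    have hi₀j : i₀ ≤ j := le_of_lt (lt_of_le_of_lt (le_max_left _ _) (Order.lt_succ _))
    have hi'j : i' < j := lt_of_le_of_lt (le_max_right _ _) (Order.lt_succ _)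
    have hij : i < j := lt_trans hii' hi'j
    -- Claim B: constancy of gamma
    have claimB : ∀ p q q' : Ordinal, p < q → q < q' → q' < lam →
        m (v p - v q) = m (v p - v q') := by
      intro p q q' h1 h2 h3
      have hpc' := hpc p q q' h1 h2 h3
      unfold ValuationSubring.ValLT at hpc'
      have : v p - v q = (v p - v q') - (v q - v q') := by ring
      rw [this, Valuation.map_sub_eq_of_lt_left _ hpc']
    -- Claim A: m (v j - w) = m (v j - v (succ j))
    have claimA : m (v j - w) = m (v j - v (Order.succ j)) := by
      have hkey := key j (Order.succ j) hi₀j (Order.lt_succ j) hjlam'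
      have : v j - v (Order.succ j) = -((v (Order.succ j) - w) - (v j - w)) := by ring
      rw [this, Valuation.map_neg, Valuation.map_sub_eq_of_lt_right _ hkey]
    -- Claim D: for p < j, m (v p - w) = m (v p - v j)
    have claimD : ∀ p : Ordinal, p < j → m (v p - w) = m (v p - v j) := by
      intro p hpj
      have hpc' := hpc p j (Order.succ j) hpj (Order.lt_succ j) hjlam'
      unfold ValuationSubring.ValLT at hpc'
      have hBp := claimB p j (Order.succ j) hpj (Order.lt_succ j) hjlam'
      have hlt : m (v j - w) < m (v p - v j) := by
        rw [claimA, hBp]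
        exact hpc'
      have : v p - w = (v p - v j) + (v j - w) := by ring
      rw [this, Valuation.map_add_eq_of_lt_left _ hlt]
    have hfin := hpc i i' j hii' hi'j hjlam
    unfold ValuationSubring.ValLT at hfin
    rw [Valuation.map_sub_swap m w (v i), Valuation.map_sub_swap m w (v i'),
      claimD i hij, claimD i' hi'j]
    exact hfin
end
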